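/- For the ergodic measure of maximal entropy ν_α of the Dyck shift (the pullback of the uniform Bernoulli measure on {α₁,...,α_m,β}^ℤ under the matching map φ_α), one has ν_α(⋃_{i=1}^m [α_i]) = m/(m+1), and the central exponent χ^c(ν_α) = ∫ φ^c dν_α = −((m−1)/(m+1)) log m, where φ^c(ω) = −H₁(ω) log m. -/

import Mathlib

/-- The Dyck alphabet on `2m` symbols: `Sum.inl i` is the left bracket `αᵢ`,
`Sum.inr i` is the right bracket `βᵢ`. -/
abbrev Letter (m : ℕ) := Fin m ⊕ Fin m

/-- One step of stack-based reduction in the Dyck monoid with zero.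
The state `some s` records the reduced (normal-form) word, stored reversed
(head of `s` = last letter of the normal form); `none` represents the zero
element of the monoid. -/
def dyckStep (m : ℕ) : Option (List (Letter m)) → Letter m → Option (List (Letter m))
  | none, _ => none
  | some s, Sum.inl i => some (Sum.inl i :: s)
  | some s, Sum.inr j =>
      match s with
      | Sum.inl i :: t => if i = j then some t else none
      | _ => some (Sum.inr j :: s)

/-- The reduction `red` of a word in the Dyck monoid with zero:
`none` is the zero element, `some s` is the reduced word (stored reversed),
and `some []` is the unit `1`. -/
def red {m : ℕ} (w : List (Letter m)) : Option (List (Letter m)) :=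
  w.foldl (dyckStep m) (some [])

/-- A word is admissible in the Dyck shift iff its reduction is nonzero. -/
def DyckAdmissible {m : ℕ} (w : List (Letter m)) : Prop := red w ≠ none

/-- Reversal-with-swap `ρ*` of a word: reverse the word and swap each
left bracket with the corresponding right bracket. -/
def rhoStar {m : ℕ} (w : List (Letter m)) : List (Letter m) :=
  (w.map Sum.swap).reverse

/-- The finite subword `ω_i ω_{i+1} ⋯ ω_{i+n-1}` of a two-sided sequence. -/
def wordAt {m : ℕ} (ω : ℤ → Letter m) (i : ℤ) (n : ℕ) : List (Letter m) :=
  List.ofFn fun k : Fin n => ω (i + k)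

/-- Membership in the two-sided Dyck shift: every finite subword is admissible. -/
def DyckSeq {m : ℕ} (ω : ℤ → Letter m) : Prop :=
  ∀ (i : ℤ) (n : ℕ), DyckAdmissible (wordAt ω i n)

/-- The sign of a letter: `+1` for a left bracket, `-1` for a right bracket. -/
def lsign {m : ℕ} : Letter m → ℤ := Sum.elim (fun _ => 1) (fun _ => -1)

/-- The height function `H_i(ω)`: the excess of left brackets over right
brackets between positions `0` and `i`, with the paper's sign convention
for negative `i`. -/
def Hfun {m : ℕ} (ω : ℤ → Letter m) (i : ℤ) : ℤ :=
  if 0 ≤ i then ∑ k ∈ Finset.range i.toNat, lsign (ω k)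
  else -∑ k ∈ Finset.range (-i).toNat, lsign (ω (i + k))

/-- The alphabet `{α₁,…,α_m, β}` of `Σ_α`, realized as `Fin (m+1)`:
the symbols `i < m` are the left brackets and `Fin.last m` is `β`. -/
abbrev AlphaLetter (m : ℕ) := Fin (m + 1)

/-- The set `B_α ⊂ Σ_D` of sequences in which every right bracket is matched. -/
def Balpha (m : ℕ) : Set (ℤ → Letter m) :=
  {ω | ∀ i : ℤ, (ω i).isRight →
    ∃ k : ℕ, 1 ≤ k ∧ Hfun ω (i + 1 - k) = Hfun ω (i + 1)}

/-- The map `φ_α` replacing every right bracket `β_j` by the single symbol `β`. -/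
def phiAlpha (m : ℕ) (ω : ℤ → Letter m) : ℤ → AlphaLetter m := fun i =>
  match ω i with
  | Sum.inl j => j.castSucc
  | Sum.inr _ => Fin.last m

open MeasureTheory ENNReal

/-- For the measure of maximal entropy `ν_α = λ_α ∘ φ_α` of
the Dyck shift (`λ_α` being the uniform Bernoulli measure on `{α₁,…,α_m,β}^ℤ`),
the union of the left-bracket cylinders has measure `m/(m+1)` and the central
exponent is `χ^c(ν_α) = ∫ φ^c dν_α = -((m-1)/(m+1)) log m`. -/
theorem mme_alpha_cylinder_and_exponent (m : ℕ) (hm : 2 ≤ m)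
    (lam : Measure (ℤ → AlphaLetter m)) [IsProbabilityMeasure lam]
    (hcyl : ∀ (F : Finset ℤ) (g : ℤ → AlphaLetter m),
      lam {ω | ∀ i ∈ F, ω i = g i} = (((m : ℝ≥0∞) + 1)⁻¹) ^ F.card)
    (nua : Measure (ℤ → Letter m)) [IsProbabilityMeasure nua]
    (hnua : ∀ S : Set (ℤ → Letter m), MeasurableSet S →
      nua S = lam (phiAlpha m '' (S ∩ Balpha m))) :
    nua {ω | (ω 0).isLeft} = (m : ℝ≥0∞) / ((m : ℝ≥0∞) + 1) ∧
    (∫ ω, (if (ω 0).isLeft then -Real.log m else Real.log m) ∂nua)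
      = -(((m : ℝ) - 1) / ((m : ℝ) + 1)) * Real.log m := by

  classical
  -- basic sets
  set S : Set (ℤ → Letter m) := {ω | (ω 0).isLeft} with hSdef
  have hS : MeasurableSet S := by
    have h1 : {x : Letter m | x.isLeft} = Set.range Sum.inl := by
      ext x; cases x <;> simp
    have : S = (fun ω : ℤ → Letter m => ω 0) ⁻¹' {x | x.isLeft} := rfl
    rw [this, h1]
    exact (measurable_pi_apply 0) measurableSet_range_inl
  set T : Set (ℤ → AlphaLetter m) := {η | η 0 = Fin.last m} with hTdef
  have hT : MeasurableSet T := (measurable_pi_apply 0) (measurableSet_singleton _)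
  have hmne : ((m : ℝ≥0∞) + 1) ≠ 0 := by
    simp
  have hmnetop : ((m : ℝ≥0∞) + 1) ≠ ⊤ := by
    simp
  -- measure of T under lam
  have hlamT : lam T = ((m : ℝ≥0∞) + 1)⁻¹ := by
    have := hcyl {0} (fun _ => Fin.last m)
    simpa [hTdef] using this
  have hlamTc : lam Tᶜ = 1 - ((m : ℝ≥0∞) + 1)⁻¹ := by
    rw [measure_compl hT (measure_ne_top _ _), hlamT, measure_univ]
  -- images
  set A : Set (ℤ → AlphaLetter m) := phiAlpha m '' (S ∩ Balpha m) with hAdef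
  set B : Set (ℤ → AlphaLetter m) := phiAlpha m '' (Sᶜ ∩ Balpha m) with hBdef
  have hAsub : A ⊆ Tᶜ := by
    rintro η ⟨ω, ⟨hωS, -⟩, rfl⟩
    have : (ω 0).isLeft := hωS
    simp only [hTdef, Set.mem_compl_iff, Set.mem_setOf_eq, phiAlpha]
    cases hx : ω 0 with
    | inl j => simp [hx, (Fin.castSucc_lt_last j).ne]
    | inr j => rw [hx] at this; simp at this
  have hBsub : B ⊆ T := by
    rintro η ⟨ω, ⟨hωS, -⟩, rfl⟩
    have : ¬ (ω 0).isLeft := hωS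
    simp only [hTdef, Set.mem_setOf_eq, phiAlpha]
    cases hx : ω 0 with
    | inl j => rw [hx] at this; simp at this
    | inr j => simp [hx]
  have hcov : (S ∩ Balpha m) ∪ (Sᶜ ∩ Balpha m) = Balpha m := by
    ext ω
    by_cases h : ω ∈ S <;> simp [h]
  have hunion : A ∪ B = phiAlpha m '' Balpha m := by
    rw [hAdef, hBdef, ← Set.image_union, hcov]
  have h1 : lam (phiAlpha m '' Balpha m) = 1 := by
    have := hnua Set.univ MeasurableSet.univ
    simpa using this.symm
  have hmd : (m : ℝ≥0∞) / ((m : ℝ≥0∞) + 1) + ((m : ℝ≥0∞) + 1)⁻¹ = 1 := by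
    rw [← one_div, ENNReal.div_add_div_same]
    exact ENNReal.div_self hmne hmnetop
  have key : lam A = (m : ℝ≥0∞) / ((m : ℝ≥0∞) + 1) := by
    have hAle : lam A ≤ 1 - ((m : ℝ≥0∞) + 1)⁻¹ := hlamTc ▸ measure_mono hAsub
    have hBle : lam B ≤ ((m : ℝ≥0∞) + 1)⁻¹ := hlamT ▸ measure_mono hBsub
    have hge : (1 : ℝ≥0∞) ≤ lam A + lam B := by
      calc (1 : ℝ≥0∞) = lam (A ∪ B) := by rw [hunion, h1]
        _ ≤ lam A + lam B := measure_union_le _ _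
    have h2 : 1 - ((m : ℝ≥0∞) + 1)⁻¹ = (m : ℝ≥0∞) / ((m : ℝ≥0∞) + 1) :=
      ENNReal.sub_eq_of_eq_add (ENNReal.inv_ne_top.mpr hmne) hmd.symm
    refine le_antisymm (h2 ▸ hAle) ?_
    have : (1 : ℝ≥0∞) - ((m : ℝ≥0∞) + 1)⁻¹ ≤ lam A := by
      refine tsub_le_iff_right.mpr ?_
      exact hge.trans (add_le_add (le_refl _) hBle)
    exact h2 ▸ this
  have hnuaS : nua S = (m : ℝ≥0∞) / ((m : ℝ≥0∞) + 1) := by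
    rw [hnua S hS]; exact key
  refine ⟨hnuaS, ?_⟩
  -- integral computation
  have htoReal : (nua S).toReal = (m : ℝ) / ((m : ℝ) + 1) := by
    rw [hnuaS, ENNReal.toReal_div, ENNReal.toReal_add (by simp) (by simp)]
    simp
  have hfun : (fun ω : ℤ → Letter m =>
      (if (ω 0).isLeft then -Real.log m else Real.log m)) =
      fun ω => S.indicator (fun _ => -Real.log m - Real.log m) ω + Real.log m := by
    funext ω
    by_cases h : (ω 0).isLeft
    · rw [if_pos h, Set.indicator_of_mem (show ω ∈ S from h)]; ring
    · rw [if_neg h, Set.indicator_of_notMem (show ω ∉ S from h)]; ring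
  rw [hfun, integral_add ((integrable_const _).indicator hS) (integrable_const _),
    integral_indicator_const _ hS, integral_const]
  simp only [measureReal_def]
  rw [htoReal]
  have hμ : (nua Set.univ).toReal = 1 := by simp
  rw [hμ]
  have hm1 : (m : ℝ) + 1 ≠ 0 := by positivity
  simp only [smul_eq_mul]
  field_simp
  ring
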